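/- Let J ⊆ (0,∞) be an open interval and N : J → ℝ twice differentiable with N > 0 on J. Let I ⊆ ℝ be an open interval and b_2 : I → J a differentiable function satisfying b_2'(t) = N(b_2(t)) for all t ∈ I, and define b_1 := N ∘ b_2. Then b_1 and b_2 are twice differentiable on I and, for all t ∈ I: (a) b_1''(t)/b_1(t) = (1/2)·(N²)''(b_2(t)); (b) b_2''(t)/b_2(t) = (1/2)·(N²)'(b_2(t))/b_2(t); (c) (b_1'(t)·b_2'(t))/(b_1(t)·b_2(t)) = b_2''(t)/b_2(t); and consequently (d) 2·( b_1''/b_1 + b_2''/b_2 + (b_1'·b_2')/(b_1·b_2) )(t) = (N²)''(b_2(t)) + 2·(N²)'(b_2(t))/b_2(t). -/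

import Mathlib

/-- Equations (6.6) and (6.7) of the paper for BTZ-type space-times: if
`b₂' = N ∘ b₂` and `b₁ = N ∘ b₂`, with `N > 0` twice differentiable on
`J ⊆ (0,∞)`, then `b₁, b₂` are twice differentiable and
(a) `b₁''/b₁ = ½(N²)''(b₂)`, (b) `b₂''/b₂ = ½(N²)'(b₂)/b₂`,
(c) `b₁'b₂'/(b₁b₂) = b₂''/b₂`, and hence
(d) `2(b₁''/b₁ + b₂''/b₂ + b₁'b₂'/(b₁b₂)) = (N²)''(b₂) + 2(N²)'(b₂)/b₂`. -/
theorem stmt_15 (J : Set ℝ) (hJopen : IsOpen J) (hJconn : J.OrdConnected)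
    (hJpos : J ⊆ Set.Ioi (0 : ℝ))
    (N : ℝ → ℝ)
    (hN : ∀ r ∈ J, DifferentiableAt ℝ N r)
    (hN' : ∀ r ∈ J, DifferentiableAt ℝ (deriv N) r)
    (hNpos : ∀ r ∈ J, 0 < N r)
    (I : Set ℝ) (hIopen : IsOpen I) (hIconn : I.OrdConnected)
    (b₂ : ℝ → ℝ) (hmap : ∀ t ∈ I, b₂ t ∈ J)
    (hb₂ : ∀ t ∈ I, HasDerivAt b₂ (N (b₂ t)) t)
    (b₁ : ℝ → ℝ) (hb₁ : b₁ = N ∘ b₂) :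
    (∀ t ∈ I, DifferentiableAt ℝ b₁ t) ∧
    (∀ t ∈ I, DifferentiableAt ℝ (deriv b₁) t) ∧
    (∀ t ∈ I, DifferentiableAt ℝ b₂ t) ∧
    (∀ t ∈ I, DifferentiableAt ℝ (deriv b₂) t) ∧
    (∀ t ∈ I,
      deriv (deriv b₁) t / b₁ t = (1 / 2) * deriv (deriv (fun r => N r ^ 2)) (b₂ t)) ∧
    (∀ t ∈ I,
      deriv (deriv b₂) t / b₂ t = (1 / 2) * deriv (fun r => N r ^ 2) (b₂ t) / b₂ t) ∧
    (∀ t ∈ I,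
      (deriv b₁ t * deriv b₂ t) / (b₁ t * b₂ t) = deriv (deriv b₂) t / b₂ t) ∧
    (∀ t ∈ I,
      2 * (deriv (deriv b₁) t / b₁ t + deriv (deriv b₂) t / b₂ t +
          (deriv b₁ t * deriv b₂ t) / (b₁ t * b₂ t)) =
        deriv (deriv (fun r => N r ^ 2)) (b₂ t) +
          2 * deriv (fun r => N r ^ 2) (b₂ t) / b₂ t) := by

  subst hb₁
  have hb₂d : ∀ t ∈ I, DifferentiableAt ℝ b₂ t := fun t ht => (hb₂ t ht).differentiableAt
  have h1 : ∀ t ∈ I, HasDerivAt (N ∘ b₂) (deriv N (b₂ t) * N (b₂ t)) t := fun t ht =>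
    (hN _ (hmap t ht)).hasDerivAt.comp t (hb₂ t ht)
  have hd1 : ∀ t ∈ I, deriv (N ∘ b₂) t = deriv N (b₂ t) * N (b₂ t) := fun t ht => (h1 t ht).deriv
  have hev : ∀ t ∈ I, deriv b₂ =ᶠ[nhds t] (N ∘ b₂) := fun t ht =>
    Filter.eventuallyEq_of_mem (hIopen.mem_nhds ht) (fun s hs => (hb₂ s hs).deriv)
  have hb₂'' : ∀ t ∈ I, deriv (deriv b₂) t = deriv N (b₂ t) * N (b₂ t) := fun t ht => by
    rw [(hev t ht).deriv_eq, hd1 t ht]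
  have hb₂''d : ∀ t ∈ I, DifferentiableAt ℝ (deriv b₂) t := fun t ht =>
    (hev t ht).differentiableAt_iff.mpr (h1 t ht).differentiableAt
  have hev1 : ∀ t ∈ I, deriv (N ∘ b₂) =ᶠ[nhds t] fun s => deriv N (b₂ s) * N (b₂ s) :=
    fun t ht => Filter.eventuallyEq_of_mem (hIopen.mem_nhds ht) (fun s hs => hd1 s hs)
  have h2 : ∀ t ∈ I, HasDerivAt (fun s => deriv N (b₂ s) * N (b₂ s))
      ((deriv (deriv N) (b₂ t) * N (b₂ t)) * N (b₂ t)
        + deriv N (b₂ t) * (deriv N (b₂ t) * N (b₂ t))) t := fun t ht =>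
    ((hN' _ (hmap t ht)).hasDerivAt.comp t (hb₂ t ht)).mul
      ((hN _ (hmap t ht)).hasDerivAt.comp t (hb₂ t ht))
  have hb₁'' : ∀ t ∈ I, deriv (deriv (N ∘ b₂)) t =
      (deriv (deriv N) (b₂ t) * N (b₂ t)) * N (b₂ t)
        + deriv N (b₂ t) * (deriv N (b₂ t) * N (b₂ t)) := fun t ht => by
    rw [(hev1 t ht).deriv_eq, (h2 t ht).deriv]
  have hb₁''d : ∀ t ∈ I, DifferentiableAt ℝ (deriv (N ∘ b₂)) t := fun t ht =>
    (hev1 t ht).differentiableAt_iff.mpr (h2 t ht).differentiableAt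
  have hsq : ∀ r ∈ J, HasDerivAt (fun r => N r ^ 2) (2 * N r * deriv N r) r := fun r hr => by
    have := (hN r hr).hasDerivAt.fun_pow 2
    simpa [mul_comm, mul_assoc, mul_left_comm] using this
  have hsqd : ∀ r ∈ J, deriv (fun r => N r ^ 2) r = 2 * N r * deriv N r :=
    fun r hr => (hsq r hr).deriv
  have hsqev : ∀ r ∈ J, deriv (fun r => N r ^ 2) =ᶠ[nhds r] fun s => 2 * N s * deriv N s :=
    fun r hr => Filter.eventuallyEq_of_mem (hJopen.mem_nhds hr) (fun s hs => hsqd s hs)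
  have hsq2 : ∀ r ∈ J, deriv (deriv (fun r => N r ^ 2)) r =
      2 * deriv N r * deriv N r + 2 * N r * deriv (deriv N) r := fun r hr => by
    rw [(hsqev r hr).deriv_eq]
    exact (((hN r hr).hasDerivAt.const_mul 2).mul (hN' r hr).hasDerivAt).deriv
  refine ⟨fun t ht => (h1 t ht).differentiableAt, hb₁''d, hb₂d, hb₂''d, ?_, ?_, ?_, ?_⟩
  · intro t ht
    have hne : N (b₂ t) ≠ 0 := (hNpos _ (hmap t ht)).ne'
    rw [hb₁'' t ht, hsq2 _ (hmap t ht)]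
    have : (N ∘ b₂) t = N (b₂ t) := rfl
    rw [this]
    field_simp
    ring
  · intro t ht
    rw [hb₂'' t ht, hsqd _ (hmap t ht)]
    ring
  · intro t ht
    have hne : N (b₂ t) ≠ 0 := (hNpos _ (hmap t ht)).ne'
    have hb2ne : b₂ t ≠ 0 := (hJpos (hmap t ht)).ne'
    rw [hd1 t ht, (hb₂ t ht).deriv, hb₂'' t ht]
    have : (N ∘ b₂) t = N (b₂ t) := rfl
    rw [this]
    field_simp
  · intro t ht
    have hne : N (b₂ t) ≠ 0 := (hNpos _ (hmap t ht)).ne'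
    have hb2ne : b₂ t ≠ 0 := (hJpos (hmap t ht)).ne'
    rw [hd1 t ht, (hb₂ t ht).deriv, hb₂'' t ht, hb₁'' t ht, hsq2 _ (hmap t ht),
      hsqd _ (hmap t ht)]
    have : (N ∘ b₂) t = N (b₂ t) := rfl
    rw [this]
    field_simp
    ring
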